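/- Let {K_i}_{i≥1} be i.i.d. ℕ+-valued with gcd of the support equal to 1, and define the von Schelling process Y_0 = 1, Y_{n+1} = |Y_n − K_{n+1}|. Let N be the number of connected components of the random graph on ℤ with edges {i, i − K_i} (K_i i.i.d. copies). Then N = 1 almost surely if and only if the von Schelling process started at 1 is recurrent (equivalently, hits 0 almost surely from every state). -/

import Mathlib

open MeasureTheory ProbabilityTheory

/-- Edge relation of the random graph on `ℤ`: an arc from `a` to `a - κ a`. -/
def graphRel (κ : ℤ → ℕ) : ℤ → ℤ → Prop := fun a b => b = a - (κ a : ℤ)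

/-- Number of connected components (in `ℕ∞`) of the graph on `ℤ` with edges
`{a, a - κ a}`. -/
noncomputable def numComp (κ : ℤ → ℕ) : ℕ∞ :=
  Cardinal.toENat (Cardinal.mk (Quot (Relation.EqvGen (graphRel κ))))

/-- The von Schelling process `Y 0 = y`, `Y (n+1) = |Y n - K (n+1)|`, driven by the
variables `K 1, K 2, …`. -/
def vonSchelling {Ω : Type*} (K : ℤ → Ω → ℕ) (ω : Ω) (y : ℕ) : ℕ → ℕ
  | 0 => y
  | n + 1 => ((vonSchelling K ω y n : ℤ) - (K ((n : ℤ) + 1) ω : ℤ)).natAbs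

namespace VSaux

/-- one step of the pair process driven by a value `k`. -/
def step (k : ℕ) (s : ℤ × ℕ) : ℤ × ℕ :=
  if s.2 = 0 then (s.1 - k, 0)
  else (s.1 - min (s.2 : ℤ) (k : ℤ), ((s.2 : ℤ) - (k : ℤ)).natAbs)

/-- pair process driven by a word `w`. -/
def S (t : ℤ) (y : ℕ) (w : ℕ → ℕ) : ℕ → ℤ × ℕ
  | 0 => (t, y)
  | n + 1 => step (w n) (S t y w n)

/-- word-driven von Schelling recursion. -/
def Yw (y : ℕ) (w : ℕ → ℕ) : ℕ → ℕ
  | 0 => y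
  | n + 1 => ((Yw y w n : ℤ) - (w n : ℤ)).natAbs

/-- self-driven pair process for an environment `κ`. -/
def Sk (κ : ℤ → ℕ) (t : ℤ) (y : ℕ) : ℕ → ℤ × ℕ
  | 0 => (t, y)
  | n + 1 => step (κ (Sk κ t y n).1) (Sk κ t y n)

def f (κ : ℤ → ℕ) (a : ℤ) : ℤ := a - κ a

lemma S_congr (t : ℤ) (y : ℕ) (w w' : ℕ → ℕ) (n : ℕ) (h : ∀ m < n, w m = w' m) :
    S t y w n = S t y w' n := by
  induction n with
  | zero => rfl
  | succ n ih =>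
    have h1 : ∀ m < n, w m = w' m := fun m hm => h m (hm.trans n.lt_succ_self)
    simp [S, ih h1, h n n.lt_succ_self]

lemma Yw_congr (y : ℕ) (w w' : ℕ → ℕ) (n : ℕ) (h : ∀ m < n, w m = w' m) :
    Yw y w n = Yw y w' n := by
  induction n with
  | zero => rfl
  | succ n ih =>
    have h1 : ∀ m < n, w m = w' m := fun m hm => h m (hm.trans n.lt_succ_self)
    simp [Yw, ih h1, h n n.lt_succ_self]

lemma dist_eq_Yw (t : ℤ) (y : ℕ) (w : ℕ → ℕ) (n : ℕ)
    (h : ∀ m < n, (S t y w m).2 ≠ 0) : (S t y w n).2 = Yw y w n := by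
  induction n with
  | zero => rfl
  | succ n ih =>
    have hn : (S t y w n).2 ≠ 0 := h n n.lt_succ_self
    have ih' := ih (fun m hm => h m (hm.trans n.lt_succ_self))
    simp [S, Yw, step, hn, ← ih']

lemma hit_iff_hit (t : ℤ) (y : ℕ) (w : ℕ → ℕ) (n : ℕ) :
    (∃ m ≤ n, (S t y w m).2 = 0) ↔ ∃ m ≤ n, Yw y w m = 0 := by
  constructor
  · rintro ⟨m, hm, h0⟩
    have hex : ∃ j, (S t y w j).2 = 0 := ⟨m, h0⟩
    classical
    let j := Nat.find hex
    refine ⟨j, le_trans (Nat.find_min' hex h0) hm, ?_⟩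
    have := dist_eq_Yw t y w j (fun i hi => Nat.find_min hex hi)
    rw [← this]; exact Nat.find_spec hex
  · rintro ⟨m, hm, h0⟩
    by_contra hS
    push_neg at hS
    have : ∀ j ≤ n, (S t y w j).2 = Yw y w j := fun j hj =>
      dist_eq_Yw t y w j (fun i hi => hS i (le_of_lt (lt_of_lt_of_le hi hj)))
    exact hS m hm (by rw [this m hm, h0])

/-- positions strictly decrease along nonzero steps. -/
lemma pos_lt (t : ℤ) (y : ℕ) (w : ℕ → ℕ) (n : ℕ) (hw : w n ≠ 0) :
    (S t y w (n + 1)).1 < (S t y w n).1 := by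
  have hw1 : (1 : ℤ) ≤ (w n : ℤ) := by exact_mod_cast Nat.one_le_iff_ne_zero.2 hw
  by_cases h : (S t y w n).2 = 0
  · simp only [S, step, h, if_true, eq_self_iff_true]
    omega
  · have h1 : (1 : ℤ) ≤ ((S t y w n).2 : ℤ) := by
      exact_mod_cast Nat.one_le_iff_ne_zero.2 h
    have : (1:ℤ) ≤ min ((S t y w n).2 : ℤ) (w n : ℤ) := le_min h1 hw1
    simp only [S, step, if_neg h]
    omega

lemma pos_strict (t : ℤ) (y : ℕ) (w : ℕ → ℕ) {a b : ℕ} (hab : a < b)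
    (hw : ∀ m < b, w m ≠ 0) : (S t y w b).1 < (S t y w a).1 := by
  induction b with
  | zero => omega
  | succ b ih =>
    have hb := pos_lt t y w b (hw b b.lt_succ_self)
    rcases Nat.lt_succ_iff_lt_or_eq.1 hab with h | h
    · exact hb.trans (ih h (fun m hm => hw m (hm.trans b.lt_succ_self)))
    · rw [h]; exact hb

end VSaux

namespace VSaux2
open VSaux

lemma f_lt (κ : ℤ → ℕ) (hκ : ∀ a, 0 < κ a) (a : ℤ) : f κ a < a := by
  have := hκ a; unfold f; omega

lemma iter_succ_lt (κ : ℤ → ℕ) (hκ : ∀ a, 0 < κ a) (a : ℤ) (i : ℕ) :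
    (f κ)^[i + 1] a < (f κ)^[i] a := by
  rw [Function.iterate_succ_apply']
  exact f_lt κ hκ _

lemma iter_le (κ : ℤ → ℕ) (hκ : ∀ a, 0 < κ a) (a : ℤ) {i j : ℕ} (hij : i ≤ j) :
    (f κ)^[j] a ≤ (f κ)^[i] a := by
  induction j with
  | zero => simp_all
  | succ j ih =>
    rcases Nat.lt_succ_iff_lt_or_eq.1 (Nat.lt_succ_of_le hij) with h | h
    · exact le_trans (iter_succ_lt κ hκ a j).le (ih (Nat.lt_succ_iff.mp h))
    · rw [h]

lemma exp_lt (κ : ℤ → ℕ) (hκ : ∀ a, 0 < κ a) (a : ℤ) {i j : ℕ}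
    (h : (f κ)^[i] a < (f κ)^[j] a) : j < i := by
  by_contra hc
  push_neg at hc
  exact absurd (iter_le κ hκ a hc) (not_le.mpr h)

lemma eqvGen_iterate (κ : ℤ → ℕ) (a : ℤ) (i : ℕ) :
    Relation.EqvGen (graphRel κ) a ((f κ)^[i] a) := by
  induction i with
  | zero => exact Relation.EqvGen.refl a
  | succ i ih =>
    refine Relation.EqvGen.trans _ _ _ ih ?_
    rw [Function.iterate_succ_apply']
    exact Relation.EqvGen.rel _ _ rfl

lemma meet_of_eqvGen (κ : ℤ → ℕ) {a b : ℤ} (h : Relation.EqvGen (graphRel κ) a b) :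
    ∃ i j : ℕ, (f κ)^[i] a = (f κ)^[j] b := by
  induction h with
  | rel x y hxy => exact ⟨1, 0, by simp [Function.iterate_one, f, hxy.symm]⟩
  | refl x => exact ⟨0, 0, rfl⟩
  | symm x y _ ih => obtain ⟨i, j, hij⟩ := ih; exact ⟨j, i, hij.symm⟩
  | trans x y z _ _ ih1 ih2 =>
    obtain ⟨i, j, h1⟩ := ih1
    obtain ⟨k, l, h2⟩ := ih2
    refine ⟨k + i, j + l, ?_⟩
    rw [Function.iterate_add_apply, h1, ← Function.iterate_add_apply,
      Nat.add_comm k j, Function.iterate_add_apply, h2, ← Function.iterate_add_apply]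

lemma Sk_eq_S (κ : ℤ → ℕ) (t : ℤ) (y : ℕ) (n : ℕ) :
    Sk κ t y n = S t y (fun m => κ ((Sk κ t y m).1)) n := by
  induction n with
  | zero => rfl
  | succ n ih => simp [Sk, S, ← ih]

lemma invariant (κ : ℤ → ℕ) (t : ℤ) (y : ℕ) (n : ℕ) :
    ∃ i j : ℕ,
      ((Sk κ t y n).1 = (f κ)^[i] t ∧
        (Sk κ t y n).1 - ((Sk κ t y n).2 : ℤ) = (f κ)^[j] (t - y)) ∨
      ((Sk κ t y n).1 = (f κ)^[j] (t - y) ∧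
        (Sk κ t y n).1 - ((Sk κ t y n).2 : ℤ) = (f κ)^[i] t) := by
  induction n with
  | zero => exact ⟨0, 0, Or.inl ⟨rfl, by simp [Sk]⟩⟩
  | succ n ih =>
    obtain ⟨i, j, ih⟩ := ih
    rcases hSk : Sk κ t y n with ⟨r, d⟩
    rw [hSk] at ih
    dsimp only at ih
    have hstep : Sk κ t y (n + 1) = step (κ r) (r, d) := by
      show step (κ (Sk κ t y n).1) (Sk κ t y n) = _
      rw [hSk]
    have hfi : (f κ)^[i + 1] t = (f κ)^[i] t - κ ((f κ)^[i] t) := by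
      rw [Function.iterate_succ_apply']; rfl
    have hfj : (f κ)^[j + 1] (t - y) = (f κ)^[j] (t - y) - κ ((f κ)^[j] (t - y)) := by
      rw [Function.iterate_succ_apply']; rfl
    by_cases h0 : d = 0
    · rcases ih with ⟨h1, h2⟩ | ⟨h1, h2⟩
      · have h2' : r = (f κ)^[j] (t - y) := by omega
        refine ⟨i + 1, j + 1, Or.inl ⟨?_, ?_⟩⟩ <;> rw [hstep] <;>
          simp only [step, if_pos h0]
        · rw [hfi, ← h1]
        · rw [hfj, ← h2']; omega
      · have h2' : r = (f κ)^[i] t := by omega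
        refine ⟨i + 1, j + 1, Or.inr ⟨?_, ?_⟩⟩ <;> rw [hstep] <;>
          simp only [step, if_pos h0]
        · rw [hfj, ← h1]
        · rw [hfi, ← h2']; omega
    · by_cases hc : κ r ≤ d
      · rcases ih with ⟨h1, h2⟩ | ⟨h1, h2⟩
        · refine ⟨i + 1, j, Or.inl ⟨?_, ?_⟩⟩ <;> rw [hstep] <;> simp only [step, if_neg h0]
          · rw [hfi, ← h1]; omega
          · omega
        · refine ⟨i, j + 1, Or.inr ⟨?_, ?_⟩⟩ <;> rw [hstep] <;> simp only [step, if_neg h0]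
          · rw [hfj, ← h1]; omega
          · omega
      · rcases ih with ⟨h1, h2⟩ | ⟨h1, h2⟩
        · refine ⟨i + 1, j, Or.inr ⟨?_, ?_⟩⟩ <;> rw [hstep] <;> simp only [step, if_neg h0]
          · omega
          · rw [hfi, ← h1]; omega
        · refine ⟨i, j + 1, Or.inl ⟨?_, ?_⟩⟩ <;> rw [hstep] <;> simp only [step, if_neg h0]
          · omega
          · rw [hfj, ← h1]; omega

lemma merge_of_hit (κ : ℤ → ℕ) (t : ℤ) (y : ℕ) (n : ℕ) (h : (Sk κ t y n).2 = 0) :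
    Relation.EqvGen (graphRel κ) t (t - y) := by
  obtain ⟨i, j, hinv⟩ := invariant κ t y n
  have key : ∃ i j : ℕ, (f κ)^[i] t = (f κ)^[j] (t - y) := by
    rcases hinv with ⟨h1, h2⟩ | ⟨h1, h2⟩
    · exact ⟨i, j, by rw [← h1, ← h2, h]; omega⟩
    · exact ⟨i, j, by rw [← h2, ← h1, h]; omega⟩
  obtain ⟨i', j', hij⟩ := key
  refine Relation.EqvGen.trans _ _ _ (eqvGen_iterate κ t i') ?_
  rw [hij]
  exact Relation.EqvGen.symm _ _ (eqvGen_iterate κ (t - y) j')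

lemma Sk_pos_le (κ : ℤ → ℕ) (hκ : ∀ a, 0 < κ a) (t : ℤ) (y : ℕ) (n : ℕ) :
    (Sk κ t y n).1 ≤ t - n := by
  induction n with
  | zero => simp [Sk]
  | succ n ih =>
    have hstep : Sk κ t y (n + 1) = step (κ (Sk κ t y n).1) (Sk κ t y n) := rfl
    have h1 := hκ (Sk κ t y n).1
    rw [hstep]
    unfold step
    by_cases h0 : (Sk κ t y n).2 = 0
    · simp only [if_pos h0]
      push_cast
      omega
    · simp only [if_neg h0]
      have h2 : (Sk κ t y n).2 ≠ 0 := h0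
      have : (1:ℤ) ≤ min ((Sk κ t y n).2 : ℤ) (κ (Sk κ t y n).1 : ℤ) := by
        refine le_min ?_ ?_ <;> [skip; skip] <;> omega
      push_cast
      omega

/-- strengthened invariant with exponent bounds, assuming the distance never vanishes. -/
lemma invariant_bdd (κ : ℤ → ℕ) (hκ : ∀ a, 0 < κ a) (t : ℤ) (y : ℕ) {I J : ℕ}
    (hm : (f κ)^[I] t = (f κ)^[J] (t - y))
    (h0 : ∀ n, (Sk κ t y n).2 ≠ 0) (n : ℕ) :
    ∃ i ≤ I, ∃ j ≤ J,
      ((Sk κ t y n).1 = (f κ)^[i] t ∧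
        (Sk κ t y n).1 - ((Sk κ t y n).2 : ℤ) = (f κ)^[j] (t - y)) ∨
      ((Sk κ t y n).1 = (f κ)^[j] (t - y) ∧
        (Sk κ t y n).1 - ((Sk κ t y n).2 : ℤ) = (f κ)^[i] t) := by
  induction n with
  | zero => exact ⟨0, Nat.zero_le _, 0, Nat.zero_le _, Or.inl ⟨rfl, by simp [Sk]⟩⟩
  | succ n ih =>
    obtain ⟨i, hi, j, hj, ih⟩ := ih
    have hd0 := h0 n
    rcases hSk : Sk κ t y n with ⟨r, d⟩
    rw [hSk] at ih hd0
    dsimp only at ih hd0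
    have hstep : Sk κ t y (n + 1) = step (κ r) (r, d) := by
      show step (κ (Sk κ t y n).1) (Sk κ t y n) = _
      rw [hSk]
    have hfi : (f κ)^[i + 1] t = (f κ)^[i] t - κ ((f κ)^[i] t) := by
      rw [Function.iterate_succ_apply']; rfl
    have hfj : (f κ)^[j + 1] (t - y) = (f κ)^[j] (t - y) - κ ((f κ)^[j] (t - y)) := by
      rw [Function.iterate_succ_apply']; rfl
    by_cases hc : κ r ≤ d
    · rcases ih with ⟨h1, h2⟩ | ⟨h1, h2⟩
      · have hiI : i < I := by
          refine exp_lt κ hκ t ?_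
          rw [hm, ← h1]
          calc (f κ)^[J] (t - y) ≤ (f κ)^[j] (t - y) := iter_le κ hκ _ hj
          _ = r - d := h2.symm
          _ < r := by omega
        refine ⟨i + 1, hiI, j, hj, Or.inl ⟨?_, ?_⟩⟩ <;> rw [hstep] <;>
            simp only [step, if_neg hd0]
        · rw [hfi, ← h1]; omega
        · omega
      · have hjJ : j < J := by
          refine exp_lt κ hκ (t - y) ?_
          rw [← hm, ← h1]
          calc (f κ)^[I] t ≤ (f κ)^[i] t := iter_le κ hκ _ hi
          _ = r - d := h2.symm
          _ < r := by omega
        refine ⟨i, hi, j + 1, hjJ, Or.inr ⟨?_, ?_⟩⟩ <;> rw [hstep] <;>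
            simp only [step, if_neg hd0]
        · rw [hfj, ← h1]; omega
        · omega
    · rcases ih with ⟨h1, h2⟩ | ⟨h1, h2⟩
      · have hiI : i < I := by
          refine exp_lt κ hκ t ?_
          rw [hm, ← h1]
          calc (f κ)^[J] (t - y) ≤ (f κ)^[j] (t - y) := iter_le κ hκ _ hj
          _ = r - d := h2.symm
          _ < r := by omega
        refine ⟨i + 1, hiI, j, hj, Or.inr ⟨?_, ?_⟩⟩ <;> rw [hstep] <;>
            simp only [step, if_neg hd0]
        · omega
        · rw [hfi, ← h1]; omega
      · have hjJ : j < J := by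
          refine exp_lt κ hκ (t - y) ?_
          rw [← hm, ← h1]
          calc (f κ)^[I] t ≤ (f κ)^[i] t := iter_le κ hκ _ hi
          _ = r - d := h2.symm
          _ < r := by omega
        refine ⟨i, hi, j + 1, hjJ, Or.inl ⟨?_, ?_⟩⟩ <;> rw [hstep] <;>
            simp only [step, if_neg hd0]
        · omega
        · rw [hfj, ← h1]; omega

lemma hit_of_meet (κ : ℤ → ℕ) (hκ : ∀ a, 0 < κ a) (t : ℤ) (y : ℕ) {I J : ℕ}
    (hm : (f κ)^[I] t = (f κ)^[J] (t - y)) :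
    ∃ n, (Sk κ t y n).2 = 0 := by
  by_contra h0
  push_neg at h0
  set c : ℤ := (f κ)^[I] t with hc
  have hlow : ∀ n, c ≤ (Sk κ t y n).1 := by
    intro n
    obtain ⟨i, hi, j, hj, hinv⟩ := invariant_bdd κ hκ t y hm h0 n
    rcases hinv with ⟨h1, _⟩ | ⟨h1, _⟩
    · rw [h1]; exact iter_le κ hκ t hi
    · rw [h1, hc]; rw [hc] at hm; rw [hm]; exact iter_le κ hκ (t - y) hj
  have hup := Sk_pos_le κ hκ t y (t - c + 1).toNat
  have := hlow (t - c + 1).toNat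
  have h00 := hlow 0
  have ht : (Sk κ t y 0).1 = t := rfl
  rw [ht] at h00
  omega

end VSaux2

namespace VSP
open VSaux VSaux2

variable {Ω : Type*} [MeasurableSpace Ω]
set_option linter.unusedSectionVars false

/-- extend a finite word by zeros. -/
def ext (n : ℕ) (v : Fin n → ℕ) : ℕ → ℕ := fun m => if h : m < n then v ⟨m, h⟩ else 0

lemma ext_eq (n : ℕ) (v : Fin n → ℕ) {m : ℕ} (h : m < n) : ext n v m = v ⟨m, h⟩ := dif_pos h

lemma states_eq (K : ℤ → Ω → ℕ) (ω : Ω) (t : ℤ) (y : ℕ) (w : ℕ → ℕ) (n : ℕ)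
    (hω : ∀ m < n, K ((S t y w m).1) ω = w m) :
    ∀ j ≤ n, Sk (fun a => K a ω) t y j = S t y w j := by
  intro j hj
  induction j with
  | zero => rfl
  | succ j ih =>
    have ihj := ih (le_of_lt (Nat.lt_of_succ_le hj))
    show step (K (Sk (fun a => K a ω) t y j).1 ω) (Sk (fun a => K a ω) t y j)
        = step (w j) (S t y w j)
    rw [ihj, hω j (Nat.lt_of_succ_le hj)]

lemma states_eq' (K : ℤ → Ω → ℕ) (ω : Ω) (t : ℤ) (y : ℕ) (w : ℕ → ℕ) (n : ℕ)
    (hω : ∀ m < n, K ((Sk (fun a => K a ω) t y m).1) ω = w m) :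
    ∀ j ≤ n, Sk (fun a => K a ω) t y j = S t y w j := by
  intro j hj
  induction j with
  | zero => rfl
  | succ j ih =>
    have ihj := ih (le_of_lt (Nat.lt_of_succ_le hj))
    show step (K (Sk (fun a => K a ω) t y j).1 ω) (Sk (fun a => K a ω) t y j)
        = step (w j) (S t y w j)
    rw [hω j (Nat.lt_of_succ_le hj), ihj]

/-- cylinder event for the pair process. -/
def cylPair (K : ℤ → Ω → ℕ) (t : ℤ) (y : ℕ) (n : ℕ) (v : Fin n → ℕ) : Set Ω :=
  ⋂ m ∈ Finset.range n, K ((S t y (ext n v) m).1) ⁻¹' {ext n v m}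

lemma mem_cylPair (K : ℤ → Ω → ℕ) (t : ℤ) (y : ℕ) (n : ℕ) (v : Fin n → ℕ) (ω : Ω) :
    ω ∈ cylPair K t y n v ↔ ∀ m < n, K ((S t y (ext n v) m).1) ω = ext n v m := by
  simp [cylPair]

/-- cylinder event for the von Schelling process. -/
def cylVS (K : ℤ → Ω → ℕ) (n : ℕ) (v : Fin n → ℕ) : Set Ω :=
  ⋂ m ∈ Finset.range n, K ((m : ℤ) + 1) ⁻¹' {ext n v m}

lemma mem_cylVS (K : ℤ → Ω → ℕ) (n : ℕ) (v : Fin n → ℕ) (ω : Ω) :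
    ω ∈ cylVS K n v ↔ ∀ m < n, K ((m : ℤ) + 1) ω = ext n v m := by
  simp [cylVS]

/-- good words: those along which the pair process hits distance `0` by time `n`. -/
def good (t : ℤ) (y : ℕ) (n : ℕ) : Set (Fin n → ℕ) :=
  {v | ∃ m ≤ n, (S t y (ext n v) m).2 = 0}

lemma E_eq (K : ℤ → Ω → ℕ) (t : ℤ) (y : ℕ) (n : ℕ) :
    {ω | ∃ m ≤ n, (Sk (fun a => K a ω) t y m).2 = 0}
      = ⋃ v ∈ good t y n, cylPair K t y n v := by
  ext ω
  simp only [Set.mem_setOf_eq, Set.mem_iUnion, exists_prop]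
  constructor
  · rintro ⟨m, hm, h0⟩
    set v : Fin n → ℕ := fun m => K ((Sk (fun a => K a ω) t y (m : ℕ)).1) ω with hv
    have hw : ∀ m < n, K ((Sk (fun a => K a ω) t y m).1) ω = ext n v m := by
      intro m hm'
      rw [ext_eq n v hm']
    have hstates := states_eq' K ω t y (ext n v) n hw
    refine ⟨v, ⟨m, hm, ?_⟩, ?_⟩
    · rw [← hstates m hm]; exact h0
    · rw [mem_cylPair]
      intro m' hm'
      rw [← hstates m' (le_of_lt hm')]
      exact hw m' hm'
  · rintro ⟨v, hg, hmem⟩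
    rw [mem_cylPair] at hmem
    have hstates := states_eq K ω t y (ext n v) n hmem
    obtain ⟨m, hm, h0⟩ := hg
    exact ⟨m, hm, by rw [hstates m hm]; exact h0⟩

lemma F_eq (K : ℤ → Ω → ℕ) (y : ℕ) (n : ℕ) :
    {ω | ∃ m ≤ n, vonSchelling K ω y m = 0}
      = ⋃ v ∈ good 0 y n, cylVS K n v := by
  have hvs : ∀ (ω : Ω) (m : ℕ), vonSchelling K ω y m = Yw y (fun j => K ((j : ℤ) + 1) ω) m := by
    intro ω m
    induction m with
    | zero => rfl
    | succ m ih => show (_ : ℤ).natAbs = (_ : ℤ).natAbs; rw [ih]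
  ext ω
  simp only [Set.mem_setOf_eq, Set.mem_iUnion, exists_prop]
  constructor
  · rintro ⟨m, hm, h0⟩
    set v : Fin n → ℕ := fun m => K (((m : ℕ) : ℤ) + 1) ω with hv
    have hw : ∀ m < n, K ((m : ℤ) + 1) ω = ext n v m := by
      intro m hm'
      rw [ext_eq n v hm']
    refine ⟨v, ?_, ?_⟩
    · rw [show good 0 y n = {v | ∃ m ≤ n, Yw y (ext n v) m = 0} from
        Set.ext fun v => hit_iff_hit 0 y (ext n v) n]
      refine ⟨m, hm, ?_⟩
      rw [← Yw_congr y (fun j => K ((j : ℤ) + 1) ω) (ext n v) m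
        (fun j hj => hw j (lt_of_lt_of_le hj hm)), ← hvs ω m]
      exact h0
    · rw [mem_cylVS]; exact hw
  · rintro ⟨v, hg, hmem⟩
    rw [mem_cylVS] at hmem
    rw [show good 0 y n = {v | ∃ m ≤ n, Yw y (ext n v) m = 0} from
      Set.ext fun v => hit_iff_hit 0 y (ext n v) n] at hg
    obtain ⟨m, hm, h0⟩ := hg
    refine ⟨m, hm, ?_⟩
    rw [hvs ω m, Yw_congr y (fun j => K ((j : ℤ) + 1) ω) (ext n v) m
      (fun j hj => hmem j (lt_of_lt_of_le hj hm))]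
    exact h0

lemma snd_S_eq (t t' : ℤ) (y : ℕ) (w : ℕ → ℕ) (m : ℕ) :
    (S t y w m).2 = (S t' y w m).2 := by
  induction m with
  | zero => rfl
  | succ m ih =>
    show (step (w m) (S t y w m)).2 = (step (w m) (S t' y w m)).2
    unfold step
    rw [ih]
    by_cases h : (S t' y w m).2 = 0 <;> simp [h]

lemma good_indep_t (t t' : ℤ) (y n : ℕ) : good t y n = good t' y n := by
  ext v
  unfold good
  simp only [Set.mem_setOf_eq]
  constructor <;> rintro ⟨m, hm, h0⟩ <;> exact ⟨m, hm, by rw [snd_S_eq _ t y] at *; omega⟩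

lemma cylPair_disjoint (K : ℤ → Ω → ℕ) (t : ℤ) (y : ℕ) (n : ℕ) {v v' : Fin n → ℕ}
    (hne : v ≠ v') : Disjoint (cylPair K t y n v) (cylPair K t y n v') := by
  rw [Set.disjoint_left]
  intro ω h1 h2
  rw [mem_cylPair] at h1 h2
  apply hne
  have hs1 := states_eq K ω t y (ext n v) n h1
  have hs2 := states_eq K ω t y (ext n v') n h2
  funext m
  have hm : (m : ℕ) < n := m.2
  have e1 := h1 m hm
  have e2 := h2 m hm
  rw [← hs1 m (le_of_lt hm)] at e1
  rw [← hs2 m (le_of_lt hm)] at e2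
  rw [ext_eq n v hm] at e1
  rw [ext_eq n v' hm] at e2
  rw [← e1, ← e2]

lemma cylVS_disjoint (K : ℤ → Ω → ℕ) (n : ℕ) {v v' : Fin n → ℕ}
    (hne : v ≠ v') : Disjoint (cylVS K n v) (cylVS K n v') := by
  rw [Set.disjoint_left]
  intro ω h1 h2
  rw [mem_cylVS] at h1 h2
  apply hne
  funext m
  have hm : (m : ℕ) < n := m.2
  have e1 := h1 m hm
  have e2 := h2 m hm
  rw [ext_eq n v hm] at e1
  rw [ext_eq n v' hm] at e2
  rw [← e1, ← e2]

lemma ident_apply (P : Measure Ω) (K : ℤ → Ω → ℕ) (hmeas : ∀ i, Measurable (K i))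
    (hident : ∀ i : ℤ, P.map (K i) = P.map (K 0)) (i : ℤ) (k : ℕ) :
    P (K i ⁻¹' {k}) = P (K 0 ⁻¹' {k}) := by
  have h1 := Measure.map_apply (hmeas i) (measurableSet_singleton k) (μ := P)
  have h2 := Measure.map_apply (hmeas 0) (measurableSet_singleton k) (μ := P)
  rw [← h1, ← h2, hident i]

lemma measure_cyl (P : Measure Ω) (K : ℤ → Ω → ℕ)
    (hmeas : ∀ i, Measurable (K i))
    (hindep : iIndepFun K P)
    (hident : ∀ i : ℤ, P.map (K i) = P.map (K 0))
    (ρ : ℕ → ℤ) (n : ℕ) (hinj : ∀ a < n, ∀ b < n, ρ a = ρ b → a = b) (w : ℕ → ℕ) :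
    P (⋂ m ∈ Finset.range n, K (ρ m) ⁻¹' {w m})
      = ∏ m ∈ Finset.range n, P (K 0 ⁻¹' {w m}) := by
  classical
  set sets : ℤ → Set ℕ := fun i => {k | ∃ m, m < n ∧ ρ m = i ∧ w m = k} with hsets
  have hsets_eq : ∀ m < n, sets (ρ m) = {w m} := by
    intro m hm
    ext k
    simp only [hsets, Set.mem_setOf_eq, Set.mem_singleton_iff]
    constructor
    · rintro ⟨m', hm', hρ, hw⟩
      rw [hinj m' hm' m hm hρ] at hw
      omega
    · rintro rfl; exact ⟨m, hm, rfl, rfl⟩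
  have key := hindep.measure_inter_preimage_eq_mul ((Finset.range n).image ρ)
    (sets := sets) (fun i _ => (Set.to_countable _).measurableSet)
  rw [Finset.set_biInter_finset_image] at key
  rw [Finset.prod_image (fun a ha b hb hab =>
    hinj a (Finset.mem_range.1 ha) b (Finset.mem_range.1 hb) hab)] at key
  have h1 : (⋂ m ∈ Finset.range n, K (ρ m) ⁻¹' sets (ρ m))
      = ⋂ m ∈ Finset.range n, K (ρ m) ⁻¹' {w m} :=
    Set.iInter₂_congr fun m hm => by rw [hsets_eq m (Finset.mem_range.1 hm)]
  have h2 : (∏ m ∈ Finset.range n, P (K (ρ m) ⁻¹' sets (ρ m)))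
      = ∏ m ∈ Finset.range n, P (K 0 ⁻¹' {w m}) :=
    Finset.prod_congr rfl fun m hm => by
      rw [hsets_eq m (Finset.mem_range.1 hm), ident_apply P K hmeas hident]
  rw [h1, h2] at key
  exact key

lemma measure_cylVS (P : Measure Ω) (K : ℤ → Ω → ℕ)
    (hmeas : ∀ i, Measurable (K i))
    (hindep : iIndepFun K P)
    (hident : ∀ i : ℤ, P.map (K i) = P.map (K 0)) (n : ℕ) (v : Fin n → ℕ) :
    P (cylVS K n v) = ∏ m ∈ Finset.range n, P (K 0 ⁻¹' {ext n v m}) :=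
  measure_cyl P K hmeas hindep hident (fun m => (m : ℤ) + 1) n
    (fun a _ b _ hab => by exact_mod_cast add_right_cancel hab) (ext n v)

lemma measure_cylPair (P : Measure Ω) (K : ℤ → Ω → ℕ)
    (hmeas : ∀ i, Measurable (K i)) (hpos : ∀ i ω, 0 < K i ω)
    (hindep : iIndepFun K P)
    (hident : ∀ i : ℤ, P.map (K i) = P.map (K 0)) (t : ℤ) (y n : ℕ) (v : Fin n → ℕ) :
    P (cylPair K t y n v) = ∏ m ∈ Finset.range n, P (K 0 ⁻¹' {ext n v m}) := by
  by_cases hz : ∃ m, m < n ∧ ext n v m = 0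
  · obtain ⟨m, hm, h0⟩ := hz
    have hL : cylPair K t y n v = ∅ := by
      rw [Set.eq_empty_iff_forall_notMem]
      intro ω hω
      rw [mem_cylPair] at hω
      have h1 := hω m hm
      have h2 := hpos ((S t y (ext n v) m).1) ω
      omega
    have hR : P (K 0 ⁻¹' {(0 : ℕ)}) = 0 := by
      have he : K 0 ⁻¹' {(0 : ℕ)} = ∅ := by
        rw [Set.eq_empty_iff_forall_notMem]
        intro ω hω
        have := hpos 0 ω
        simp only [Set.mem_preimage, Set.mem_singleton_iff] at hω
        omega
      rw [he, measure_empty]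
    rw [hL, measure_empty]
    symm
    apply Finset.prod_eq_zero (Finset.mem_range.2 hm)
    rw [h0, hR]
  · push_neg at hz
    apply measure_cyl P K hmeas hindep hident _ n _ (ext n v)
    intro a ha b hb hab
    rcases lt_trichotomy a b with h | h | h
    · exfalso
      have := pos_strict t y (ext n v) h (fun m hm => hz m (lt_trans hm hb))
      omega
    · exact h
    · exfalso
      have := pos_strict t y (ext n v) h (fun m hm => hz m (lt_trans hm ha))
      omega

lemma measurable_cylPair (K : ℤ → Ω → ℕ) (hmeas : ∀ i, Measurable (K i))
    (t : ℤ) (y n : ℕ) (v : Fin n → ℕ) : MeasurableSet (cylPair K t y n v) :=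
  MeasurableSet.biInter (Finset.range n).countable_toSet
    fun m _ => hmeas _ (measurableSet_singleton _)

lemma measurable_cylVS (K : ℤ → Ω → ℕ) (hmeas : ∀ i, Measurable (K i))
    (n : ℕ) (v : Fin n → ℕ) : MeasurableSet (cylVS K n v) :=
  MeasurableSet.biInter (Finset.range n).countable_toSet
    fun m _ => hmeas _ (measurableSet_singleton _)

lemma measure_E_eq_F (P : Measure Ω) (K : ℤ → Ω → ℕ)
    (hmeas : ∀ i, Measurable (K i)) (hpos : ∀ i ω, 0 < K i ω)
    (hindep : iIndepFun K P)
    (hident : ∀ i : ℤ, P.map (K i) = P.map (K 0)) (t : ℤ) (y n : ℕ) :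
    P {ω | ∃ m ≤ n, (Sk (fun a => K a ω) t y m).2 = 0}
      = P {ω | ∃ m ≤ n, vonSchelling K ω y m = 0} := by
  rw [E_eq, F_eq, good_indep_t 0 t y n]
  rw [measure_biUnion (Set.to_countable _)
      (fun v _ v' _ hne => cylPair_disjoint K t y n hne)
      (fun v _ => measurable_cylPair K hmeas t y n v),
    measure_biUnion (Set.to_countable _)
      (fun v _ v' _ hne => cylVS_disjoint K n hne)
      (fun v _ => measurable_cylVS K hmeas n v)]
  exact tsum_congr fun v => by
    rw [measure_cylPair P K hmeas hpos hindep hident t y n v,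
      measure_cylVS P K hmeas hindep hident n v]

lemma exists_eq_iUnion (Q : Ω → ℕ → Prop) :
    {ω | ∃ m, Q ω m} = ⋃ n, {ω | ∃ m ≤ n, Q ω m} := by
  ext ω
  simp only [Set.mem_setOf_eq, Set.mem_iUnion]
  constructor
  · rintro ⟨m, hm⟩; exact ⟨m, m, le_rfl, hm⟩
  · rintro ⟨n, m, _, hm⟩; exact ⟨m, hm⟩

lemma mono_exists (Q : Ω → ℕ → Prop) :
    Monotone fun n => {ω | ∃ m ≤ n, Q ω m} := by
  intro a b hab ω
  simp only [Set.mem_setOf_eq]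
  rintro ⟨m, hm, h⟩
  exact ⟨m, le_trans hm hab, h⟩

lemma measure_merge_eq (P : Measure Ω) (K : ℤ → Ω → ℕ)
    (hmeas : ∀ i, Measurable (K i)) (hpos : ∀ i ω, 0 < K i ω)
    (hindep : iIndepFun K P)
    (hident : ∀ i : ℤ, P.map (K i) = P.map (K 0)) (t : ℤ) (y : ℕ) :
    P {ω | ∃ m, (Sk (fun a => K a ω) t y m).2 = 0}
      = P {ω | ∃ m, vonSchelling K ω y m = 0} := by
  rw [exists_eq_iUnion, exists_eq_iUnion]
  rw [(mono_exists (fun ω m => (Sk (fun a => K a ω) t y m).2 = 0)).directed_le.measure_iUnion,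
    (mono_exists (fun ω m => vonSchelling K ω y m = 0)).directed_le.measure_iUnion]
  exact iSup_congr fun n => measure_E_eq_F P K hmeas hpos hindep hident t y n

lemma measurable_E (K : ℤ → Ω → ℕ) (hmeas : ∀ i, Measurable (K i)) (t : ℤ) (y n : ℕ) :
    MeasurableSet {ω | ∃ m ≤ n, (Sk (fun a => K a ω) t y m).2 = 0} := by
  rw [E_eq]
  exact MeasurableSet.biUnion (Set.to_countable _)
    fun v _ => measurable_cylPair K hmeas t y n v

lemma measurable_ME (K : ℤ → Ω → ℕ) (hmeas : ∀ i, Measurable (K i)) (t : ℤ) (y : ℕ) :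
    MeasurableSet {ω | ∃ m, (Sk (fun a => K a ω) t y m).2 = 0} := by
  rw [exists_eq_iUnion]
  exact MeasurableSet.iUnion fun n => measurable_E K hmeas t y n

lemma measurable_MF (K : ℤ → Ω → ℕ) (hmeas : ∀ i, Measurable (K i)) (y : ℕ) :
    MeasurableSet {ω | ∃ m, vonSchelling K ω y m = 0} := by
  rw [exists_eq_iUnion]
  refine MeasurableSet.iUnion fun n => ?_
  rw [F_eq]
  exact MeasurableSet.biUnion (Set.to_countable _)
    fun v _ => measurable_cylVS K hmeas n v

lemma numComp_eq_one_iff (κ : ℤ → ℕ) :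
    numComp κ = 1 ↔ ∀ a b : ℤ, Relation.EqvGen (graphRel κ) a b := by
  unfold numComp
  rw [show (1 : ℕ∞) = ((1 : ℕ) : ℕ∞) from rfl, Cardinal.toENat_eq_nat, Nat.cast_one,
    Cardinal.eq_one_iff_unique]
  constructor
  · rintro ⟨hsub, _⟩ a b
    have := Quot.eqvGen_exact (@Subsingleton.elim _ hsub
      (Quot.mk (Relation.EqvGen (graphRel κ)) a) (Quot.mk (Relation.EqvGen (graphRel κ)) b))
    exact (Equivalence.eqvGen_iff
      (Relation.EqvGen.is_equivalence (graphRel κ))).1 this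
  · intro h
    refine ⟨⟨fun x y => ?_⟩, ⟨Quot.mk _ 0⟩⟩
    induction x using Quot.ind with | _ a =>
    induction y using Quot.ind with | _ b =>
    exact Quot.sound (h a b)

lemma eqvGen_all (κ : ℤ → ℕ) (h : ∀ a : ℤ, Relation.EqvGen (graphRel κ) a (a - 1)) :
    ∀ a b : ℤ, Relation.EqvGen (graphRel κ) a b := by
  have h0 : ∀ b : ℤ, Relation.EqvGen (graphRel κ) 0 b := by
    intro b
    induction b using Int.induction_on with
    | zero => exact .refl 0
    | succ k ih =>
      have hk := h ((k : ℤ) + 1)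
      rw [show ((k : ℤ) + 1 - 1) = (k : ℤ) by ring] at hk
      exact .trans _ _ _ ih (.symm _ _ hk)
    | pred k ih => exact .trans _ _ _ ih (h (-(k : ℤ)))
  intro a b
  exact .trans _ _ _ (.symm _ _ (h0 a)) (h0 b)

end VSP

/-- For i.i.d. `{K i}` with gcd of the support equal to `1`, the random graph on `ℤ`
with edges `{i, i - K i}` has a single connected component almost surely if and only if
the von Schelling process is recurrent, i.e. hits `0` almost surely from every state. -/
theorem one_component_iff_vonSchelling_recurrent
    {Ω : Type*} [MeasurableSpace Ω] (P : Measure Ω) [IsProbabilityMeasure P]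
    (K : ℤ → Ω → ℕ) (hmeas : ∀ n, Measurable (K n)) (hpos : ∀ n ω, 0 < K n ω)
    (hindep : iIndepFun K P)
    (hident : ∀ n : ℤ, P.map (K n) = P.map (K 0))
    (hgcd : ∀ d : ℕ, (∀ k : ℕ, P {ω | K 0 ω = k} ≠ 0 → d ∣ k) → d = 1) :
    (∀ᵐ ω ∂P, numComp (fun n => K n ω) = 1) ↔
      ∀ y : ℕ, ∀ᵐ ω ∂P, ∃ n : ℕ, vonSchelling K ω y n = 0 := by
  clear hgcd
  constructor
  · intro h y
    rcases Nat.eq_zero_or_pos y with rfl | hy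
    · exact Filter.Eventually.of_forall fun ω => ⟨0, rfl⟩
    · have hae : ∀ᵐ ω ∂P, ∃ m, (VSaux.Sk (fun a => K a ω) (y : ℤ) y m).2 = 0 := by
        filter_upwards [h] with ω hω
        have hcomp := (VSP.numComp_eq_one_iff _).1 hω (y : ℤ) ((y : ℤ) - (y : ℕ))
        obtain ⟨i, j, hij⟩ := VSaux2.meet_of_eqvGen _ hcomp
        exact VSaux2.hit_of_meet _ (fun a => hpos a ω) _ _ hij
      have hME := VSP.measurable_ME K hmeas (y : ℤ) y
      have hMF := VSP.measurable_MF K hmeas y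
      have h0 : P {ω | ∃ m, (VSaux.Sk (fun a => K a ω) (y : ℤ) y m).2 = 0}ᶜ = 0 := by
        rw [Set.compl_setOf]
        exact ae_iff.1 hae
      have h1 := (prob_compl_eq_zero_iff hME).1 h0
      rw [VSP.measure_merge_eq P K hmeas hpos hindep hident (y : ℤ) y] at h1
      have h2 := (prob_compl_eq_zero_iff hMF).2 h1
      rw [Set.compl_setOf] at h2
      exact ae_iff.2 h2
  · intro h
    have key : ∀ a : ℤ, ∀ᵐ ω ∂P, ∃ m, (VSaux.Sk (fun i => K i ω) a 1 m).2 = 0 := by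
      intro a
      have hMF := VSP.measurable_MF K hmeas 1
      have hME := VSP.measurable_ME K hmeas a 1
      have h0 : P {ω | ∃ n, vonSchelling K ω 1 n = 0}ᶜ = 0 := by
        rw [Set.compl_setOf]
        exact ae_iff.1 (h 1)
      have h1 := (prob_compl_eq_zero_iff hMF).1 h0
      rw [← VSP.measure_merge_eq P K hmeas hpos hindep hident a 1] at h1
      have h2 := (prob_compl_eq_zero_iff hME).2 h1
      rw [Set.compl_setOf] at h2
      exact ae_iff.2 h2
    have hall : ∀ᵐ ω ∂P, ∀ a : ℤ, ∃ m, (VSaux.Sk (fun i => K i ω) a 1 m).2 = 0 :=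
      (MeasureTheory.ae_all_iff).2 key
    filter_upwards [hall] with ω hω
    refine (VSP.numComp_eq_one_iff _).2 (VSP.eqvGen_all _ fun a => ?_)
    obtain ⟨m, hm⟩ := hω a
    have := VSaux2.merge_of_hit (fun i => K i ω) a 1 m hm
    simpa using this
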